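/- Let Σ_u = (X_u, Y_u, B_u) and Σ_v = μ_k(Σ_u) be seeds of an (R,Z)-cluster pattern related by mutation in direction k, and let S be the R-skew-balance (so SRB_t is skew-symmetric for all t). Let H = H_u^v(X) be the matrix with entries H_{il} = (x_{i;u}/x_{l;v})·∂x_{l;v}/∂x_{i;u}. Then H·(B_v R^{-1} S^{-1})·H^⊤ = B_u R^{-1} S^{-1} and det(H) = −1. -/

import Mathlib

open Matrix Finset

set_option maxHeartbeats 1600000

section Helpers

lemma fderiv_single_eq_deriv_update {n : ℕ} (f : (Fin n → ℝ) → ℝ) (p : Fin n → ℝ) (i : Fin n)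
    (hf : DifferentiableAt ℝ f p) :
    fderiv ℝ f p (Pi.single i 1) = deriv (fun t => f (Function.update p i t)) (p i) := by
  have hL : HasDerivAt (fun t : ℝ => Function.update p i t) (Pi.single i 1) (p i) := by
    have he : (fun t : ℝ => Function.update p i t)
        = fun t => Function.update p i 0 + t • Pi.single i 1 := by
      funext t; funext j
      by_cases hj : j = i <;> simp [Function.update_apply, hj, Pi.single_apply]
    rw [he]
    simpa using (((hasDerivAt_id (p i)).smul_const (Pi.single i (1:ℝ)))).const_add
      (Function.update p i 0)
  have hupd : Function.update p i (p i) = p := Function.update_eq_self i p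
  have h2 : HasDerivAt (fun t => f (Function.update p i t))
      (fderiv ℝ f p (Pi.single i 1)) (p i) := by
    have := HasFDerivAt.comp_hasDerivAt (p i)
      (hupd.symm ▸ hf.hasFDerivAt : HasFDerivAt f (fderiv ℝ f p) (Function.update p i (p i))) hL
    exact this
  exact (h2.deriv).symm

lemma prod_update_pow {n : ℕ} (p : Fin n → ℝ) (i : Fin n) (t : ℝ) (a : Fin n → ℕ) :
    (∏ j, (Function.update p i t) j ^ a j) = t ^ a i * ∏ j ∈ univ.erase i, p j ^ a j := by
  rw [← Finset.mul_prod_erase Finset.univ (fun j => (Function.update p i t) j ^ a j)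
    (Finset.mem_univ i)]
  congr 1
  · simp
  · exact Finset.prod_congr rfl fun j hj => by
      rw [Function.update_of_ne (Finset.ne_of_mem_erase hj)]

lemma prod_update_zpow {n : ℕ} (p : Fin n → ℝ) (i : Fin n) (t : ℝ) (b : Fin n → ℤ) :
    (∏ j, (Function.update p i t) j ^ b j) = t ^ b i * ∏ j ∈ univ.erase i, p j ^ b j := by
  rw [← Finset.mul_prod_erase Finset.univ (fun j => (Function.update p i t) j ^ b j)
    (Finset.mem_univ i)]
  congr 1
  · simp
  · exact Finset.prod_congr rfl fun j hj => by
      rw [Function.update_of_ne (Finset.ne_of_mem_erase hj)]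

lemma nat_mul_pow_sub_one (a : ℕ) (x : ℝ) (hx : x ≠ 0) :
    (a : ℝ) * x ^ (a - 1) = a * x ^ a / x := by
  cases a with
  | zero => simp
  | succ m => rw [Nat.succ_sub_one, pow_succ]; field_simp

lemma deriv_update_exchange {n : ℕ} (rk : ℕ) (hrk : rk ≠ 0) (a : Fin n → ℕ) (b : Fin n → ℤ)
    (y c : ℝ) (z : ℕ → ℝ) (hc : c ≠ 0)
    (p : Fin n → ℝ) (hp : ∀ j, p j ≠ 0) (i k : Fin n)
    (hS : (∑ m ∈ Finset.range (rk+1), z m * (y * ∏ j, p j ^ b j) ^ m) ≠ 0) :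
    HasDerivAt (fun t => ((Function.update p i t) k)⁻¹ *
        (∏ j, (Function.update p i t) j ^ a j) ^ rk *
        (∑ m ∈ Finset.range (rk+1), z m * (y * ∏ j, (Function.update p i t) j ^ b j) ^ m) / c)
      ((((p k)⁻¹ * (∏ j, p j ^ a j) ^ rk *
          (∑ m ∈ Finset.range (rk+1), z m * (y * ∏ j, p j ^ b j) ^ m) / c) / p i) *
        (-(if i = k then 1 else 0) + rk * a i + b i *
          ((∑ m ∈ Finset.range (rk+1), z m * (y * ∏ j, p j ^ b j) ^ m * m) /
           (∑ m ∈ Finset.range (rk+1), z m * (y * ∏ j, p j ^ b j) ^ m))))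
      (p i) := by
  classical
  set C : ℝ := ∏ j ∈ univ.erase i, p j ^ a j with hCdef
  set D : ℝ := ∏ j ∈ univ.erase i, p j ^ b j with hDdef
  have hC : C ≠ 0 := Finset.prod_ne_zero_iff.2 fun j _ => pow_ne_zero _ (hp j)
  have hD : D ≠ 0 := Finset.prod_ne_zero_iff.2 fun j _ => zpow_ne_zero _ (hp j)
  have hfull_a : (∏ j, p j ^ a j) = p i ^ a i * C := by
    have := prod_update_pow p i (p i) a
    simpa [Function.update_eq_self] using this
  have hfull_b : (∏ j, p j ^ b j) = p i ^ b i * D := by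
    have := prod_update_zpow p i (p i) b
    simpa [Function.update_eq_self] using this
  -- rewrite the function in one-variable form
  have hfun : (fun t => ((Function.update p i t) k)⁻¹ *
        (∏ j, (Function.update p i t) j ^ a j) ^ rk *
        (∑ m ∈ Finset.range (rk+1), z m * (y * ∏ j, (Function.update p i t) j ^ b j) ^ m) / c)
      = fun t => (if k = i then t else p k)⁻¹ * (t ^ a i * C) ^ rk *
        (∑ m ∈ Finset.range (rk+1), z m * (y * (t ^ b i * D)) ^ m) / c := by
    funext t
    rw [prod_update_pow, prod_update_zpow, Function.update_apply]
  rw [hfun]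
  -- build the derivative
  have h1 : HasDerivAt (fun t : ℝ => (if k = i then t else p k)⁻¹)
      (if k = i then -(p i ^ 2)⁻¹ else 0) (p i) := by
    by_cases h : k = i
    · simpa [h] using hasDerivAt_inv (hp i)
    · simpa [h] using hasDerivAt_const (p i) (p k)⁻¹
  have h2 : HasDerivAt (fun t : ℝ => (t ^ a i * C) ^ rk)
      ((rk : ℝ) * (p i ^ a i * C) ^ (rk - 1) * ((a i : ℝ) * p i ^ (a i - 1) * C)) (p i) :=
    ((hasDerivAt_pow (a i) (p i)).mul_const C).pow rk
  have h3 : HasDerivAt (fun t : ℝ => ∑ m ∈ Finset.range (rk+1), z m * (y * (t ^ b i * D)) ^ m)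
      (∑ m ∈ Finset.range (rk+1), z m * ((m : ℝ) * (y * (p i ^ b i * D)) ^ (m - 1) *
        (y * ((b i : ℝ) * p i ^ (b i - 1) * D)))) (p i) := by
    apply HasDerivAt.fun_sum
    intro m _
    exact ((((hasDerivAt_zpow (b i) (p i) (Or.inl (hp i))).mul_const D).const_mul y).pow
      m).const_mul (z m)
  have hmain := ((h1.mul h2).mul h3).div_const c
  refine hmain.congr_deriv (Eq.symm ?_)
  simp only [Pi.mul_apply]
  -- now algebra
  set S : ℝ := ∑ m ∈ Finset.range (rk+1), z m * (y * ∏ j, p j ^ b j) ^ m with hSdef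
  set T : ℝ := ∑ m ∈ Finset.range (rk+1), z m * (y * ∏ j, p j ^ b j) ^ m * m with hTdef
  have hSeq : (∑ m ∈ Finset.range (rk+1), z m * (y * (p i ^ b i * D)) ^ m) = S := by
    rw [hSdef, hfull_b]
  have hTsum : (∑ m ∈ Finset.range (rk+1), z m * ((m : ℝ) * (y * (p i ^ b i * D)) ^ (m - 1) *
        (y * ((b i : ℝ) * p i ^ (b i - 1) * D)))) = (b i : ℝ) / p i * T := by
    rw [hTdef, Finset.mul_sum]
    refine Finset.sum_congr rfl fun m _ => ?_
    rw [hfull_b]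
    cases m with
    | zero => simp
    | succ m' =>
      rw [Nat.succ_sub_one, pow_succ]
      have hpe : (p i : ℝ) ^ (b i - 1) = p i ^ b i / p i := by
        rw [zpow_sub_one₀ (hp i)]; ring
      rw [hpe]
      push_cast
      field_simp
  rw [hSeq, hTsum]
  have e3 : (rk : ℝ) * (p i ^ a i * C) ^ (rk - 1) * ((a i : ℝ) * p i ^ (a i - 1) * C)
      = (rk : ℝ) * (a i : ℝ) * (p i ^ a i * C) ^ rk / p i := by
    rcases Nat.eq_zero_or_pos (a i) with ha | ha
    · simp [ha]
    · rw [eq_div_iff (hp i)]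
      calc (rk : ℝ) * (p i ^ a i * C) ^ (rk - 1) * ((a i : ℝ) * p i ^ (a i - 1) * C) * p i
          = (rk : ℝ) * (a i : ℝ) * ((p i ^ a i * C) ^ (rk - 1) * ((p i ^ (a i - 1) * p i) * C)) := by
            ring
        _ = (rk : ℝ) * (a i : ℝ) * ((p i ^ a i * C) ^ (rk - 1) * (p i ^ a i * C)) := by
            rw [pow_sub_one_mul (Nat.pos_iff_ne_zero.mp ha)]
        _ = (rk : ℝ) * (a i : ℝ) * (p i ^ a i * C) ^ rk := by rw [pow_sub_one_mul hrk]
  rw [e3, hfull_a]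
  set Q := (p i ^ a i * C) ^ rk with hQdef
  have hQ0 : Q ≠ 0 := by
    rw [hQdef]; exact pow_ne_zero _ (mul_ne_zero (pow_ne_zero _ (hp i)) hC)
  clear_value Q
  clear_value S T C D
  by_cases h : i = k
  · subst h
    simp only [if_true]
    have hpi := hp i
    field_simp [hpi]
  · have h' : ¬ (k = i) := fun hh => h hh.symm
    simp only [if_neg h, if_neg h']
    have hpi := hp i
    have hpk := hp k
    field_simp [hpi, hpk]
    ring

lemma core_identity (rk sk rj sj : ℤ) (E : ℝ) (hrk : 0 < rk) (hsk : 0 < sk) (hrj : 0 < rj)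
    (hsj : 0 < sj) (Bik Bkj Bjk Bij : ℤ)
    (hrel : (sj : ℝ) * rj * (Bjk : ℝ) = -((sk : ℝ) * rk * (Bkj : ℝ))) :
    ((rk : ℝ) * ((max (-Bjk) 0 : ℤ) : ℝ) + (Bjk : ℝ) * E) * ((-Bik : ℤ) : ℝ) * (rk : ℝ)⁻¹ * (sk : ℝ)⁻¹
      + ((rk : ℝ) * ((max (-Bik) 0 : ℤ) : ℝ) + (Bik : ℝ) * E) * ((-Bkj : ℤ) : ℝ) * (rj : ℝ)⁻¹ * (sj : ℝ)⁻¹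
      + (((Bij + rk * (Bik * max (-Bkj) 0 + max Bik 0 * Bkj) : ℤ)) : ℝ) * (rj : ℝ)⁻¹ * (sj : ℝ)⁻¹
      = (Bij : ℝ) * (rj : ℝ)⁻¹ * (sj : ℝ)⁻¹ := by
  have hrk' : (0:ℝ) < (rk:ℝ) := by exact_mod_cast hrk
  have hsk' : (0:ℝ) < (sk:ℝ) := by exact_mod_cast hsk
  have hrj' : (0:ℝ) < (rj:ℝ) := by exact_mod_cast hrj
  have hsj' : (0:ℝ) < (sj:ℝ) := by exact_mod_cast hsj
  have hBjk : (Bjk : ℝ) = -((sk:ℝ) * rk * (Bkj : ℝ)) / ((sj:ℝ) * rj) := by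
    rw [eq_div_iff (by positivity)]; linarith
  push_cast
  rcases le_or_gt (Bkj : ℝ) 0 with hkj | hkj
  · have hjk : (0:ℝ) ≤ (Bjk : ℝ) := by
      nlinarith [mul_pos hsj' hrj', mul_nonneg (mul_pos hsk' hrk').le (neg_nonneg.2 hkj)]
    rw [max_eq_right (by linarith : -(Bjk:ℝ) ≤ 0),
      max_eq_left (by linarith : (0:ℝ) ≤ -(Bkj:ℝ))]
    rcases le_or_gt (Bik : ℝ) 0 with hik | hik
    · rw [max_eq_left (by linarith : (0:ℝ) ≤ -(Bik:ℝ)), max_eq_right hik]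
      rw [hBjk]; field_simp; ring
    · rw [max_eq_right (by linarith : -(Bik:ℝ) ≤ 0), max_eq_left hik.le]
      rw [hBjk]; field_simp; ring
  · have hjk : (Bjk : ℝ) ≤ 0 := by
      nlinarith [mul_pos hsj' hrj', mul_nonneg (mul_pos hsk' hrk').le hkj.le]
    rw [max_eq_left (by linarith : (0:ℝ) ≤ -(Bjk:ℝ)),
      max_eq_right (by linarith : -(Bkj:ℝ) ≤ 0)]
    rcases le_or_gt (Bik : ℝ) 0 with hik | hik
    · rw [max_eq_left (by linarith : (0:ℝ) ≤ -(Bik:ℝ)), max_eq_right hik]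
      rw [hBjk]; field_simp; ring
    · rw [max_eq_right (by linarith : -(Bik:ℝ) ≤ 0), max_eq_left hik.le]
      rw [hBjk]; field_simp; ring

lemma updateColumn_one_det {n : ℕ} (k : Fin n) (h : Fin n → ℝ) :
    ((1 : Matrix (Fin n) (Fin n) ℝ).updateCol k h).det = h k := by
  have := Matrix.cramer_apply (1 : Matrix (Fin n) (Fin n) ℝ) h k
  rw [Matrix.cramer_one] at this
  simp at this
  rw [← this]

lemma updateColumn_one_mul_apply {n : ℕ} (k : Fin n) (h : Fin n → ℝ)
    (M : Matrix (Fin n) (Fin n) ℝ) (i j : Fin n) :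
    (((1 : Matrix (Fin n) (Fin n) ℝ).updateCol k h) * M) i j
      = h i * M k j + (if i = k then 0 else M i j) := by
  rw [Matrix.mul_apply, ← Finset.add_sum_erase Finset.univ _ (Finset.mem_univ k)]
  congr 1
  · simp [Matrix.updateCol_apply]
  · have step : ∀ a ∈ Finset.univ.erase k,
        (1 : Matrix (Fin n) (Fin n) ℝ).updateCol k h i a * M a j
          = if i = a then M a j else 0 := by
      intro a ha
      rw [Matrix.updateCol_apply, if_neg (Finset.ne_of_mem_erase ha), Matrix.one_apply]
      split <;> simp
    rw [Finset.sum_congr rfl step, Finset.sum_ite_eq]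
    by_cases hik : i = k <;> simp [Finset.mem_erase, hik]

lemma mul_updateColumn_one_transpose_apply {n : ℕ} (k : Fin n) (h : Fin n → ℝ)
    (M : Matrix (Fin n) (Fin n) ℝ) (i j : Fin n) :
    (M * ((1 : Matrix (Fin n) (Fin n) ℝ).updateCol k h)ᵀ) i j
      = h j * M i k + (if j = k then 0 else M i j) := by
  rw [Matrix.mul_apply]
  have entry : ∀ b, ((1 : Matrix (Fin n) (Fin n) ℝ).updateCol k h)ᵀ b j
      = if b = k then h j else if j = b then 1 else 0 := by
    intro b
    rw [Matrix.transpose_apply, Matrix.updateCol_apply, Matrix.one_apply]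
  rw [← Finset.add_sum_erase Finset.univ _ (Finset.mem_univ k)]
  congr 1
  · rw [entry k, if_pos rfl]; ring
  · have step : ∀ b ∈ Finset.univ.erase k,
        M i b * ((1 : Matrix (Fin n) (Fin n) ℝ).updateCol k h)ᵀ b j
          = if j = b then M i b else 0 := by
      intro b hb
      rw [entry b, if_neg (Finset.ne_of_mem_erase hb)]
      split <;> simp
    rw [Finset.sum_congr rfl step, Finset.sum_ite_eq]
    by_cases hjk : j = k <;> simp [Finset.mem_erase, hjk]

end Helpers


/-- The generalized matrix mutation `μ_k^g` in direction `k`, with parameters `r`. -/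
def genMut {n : ℕ} (r : Fin n → ℤ) (k : Fin n)
    (B : Matrix (Fin n) (Fin n) ℤ) : Matrix (Fin n) (Fin n) ℤ :=
  Matrix.of fun i j =>
    if i = k ∨ j = k then -B i j
    else B i j + r k * (B i k * max (-B k j) 0 + max (B i k) 0 * B k j)

/-- The matrix `H_u^v(X)` at a point `p`, with `(i,l)`-entry
`(x_{i;u}/x_{l;v}) ∂x_{l;v}/∂x_{i;u}`, the `u`-cluster being the coordinates. -/
noncomputable def Hmat {n : ℕ} (X' : Fin n → (Fin n → ℝ) → ℝ) (p : Fin n → ℝ) :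
    Matrix (Fin n) (Fin n) ℝ :=
  Matrix.of fun i l => p i / X' l p * fderiv ℝ (X' l) p (Pi.single i 1)

/-- if `Σ_v = μ_k(Σ_u)` in an `(R,Z)`-cluster pattern with
`R`-skew-balance `S`, then `H·(B_v R⁻¹ S⁻¹)·Hᵀ = B_u R⁻¹ S⁻¹` and `det H = -1`,
where `H = H_u^v(X)`.  The cluster of `Σ_u` is taken as the coordinate functions;
the `(R,Z)`-exchange relation produces `x_{k;v}` with positive constants
`y_k`, `z_{k,m}` (with `z_{k,0} = z_{k,r_k} = 1`) and a positive constant `c`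
coming from the auxiliary addition `⊕` in the coefficient semifield. -/
theorem H_single_mutation (n : ℕ) (r s : Fin n → ℤ)
    (hr : ∀ i, 0 < r i) (hs : ∀ i, 0 < s i)
    (B B' : Matrix (Fin n) (Fin n) ℤ) (k : Fin n)
    (hskewB : (Matrix.diagonal s * Matrix.diagonal r * B)ᵀ =
      -(Matrix.diagonal s * Matrix.diagonal r * B))
    (X X' : Fin n → (Fin n → ℝ) → ℝ)
    (hX : ∀ i, X i = fun q => q i)
    (hB' : B' = genMut r k B)
    (hXi : ∀ i, i ≠ k → X' i = X i)
    (hXk : ∃ (y c : ℝ) (z : ℕ → ℝ), 0 < y ∧ 0 < c ∧ (∀ m, 0 < z m) ∧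
      z 0 = 1 ∧ z (r k).toNat = 1 ∧
      X' k = fun q =>
        (X k q)⁻¹ * (∏ j, X j q ^ (max (-(B j k)) 0).toNat) ^ (r k).toNat *
          (∑ m ∈ Finset.range ((r k).toNat + 1),
            z m * (y * ∏ j, X j q ^ (B j k)) ^ m) / c)
    (p : Fin n → ℝ) (hp : ∀ i, p i ≠ 0) (hX'p : ∀ i, X' i p ≠ 0)
    (hd : ∀ i, DifferentiableAt ℝ (X' i) p) :
    Hmat X' p *
        (B'.map (Int.cast : ℤ → ℝ) * (Matrix.diagonal fun i => ((r i : ℝ))⁻¹) *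
          (Matrix.diagonal fun i => ((s i : ℝ))⁻¹)) *
        (Hmat X' p)ᵀ =
      B.map (Int.cast : ℤ → ℝ) * (Matrix.diagonal fun i => ((r i : ℝ))⁻¹) *
        (Matrix.diagonal fun i => ((s i : ℝ))⁻¹) ∧
    (Hmat X' p).det = -1 := by
  classical
  obtain ⟨y, c, z, hy, hc, hz, hz0, hzr, hXk'⟩ := hXk
  simp only [hX] at hXk'
  -- basic positivity / nonzero facts
  have hrkN : ((r k).toNat : ℤ) = r k := Int.toNat_of_nonneg (hr k).le
  have hrk0 : (r k).toNat ≠ 0 := by have := hr k; omega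
  -- entrywise skew-symmetry
  rw [Matrix.diagonal_mul_diagonal] at hskewB
  have hskewZ : ∀ i j, (s j * r j) * B j i = -((s i * r i) * B i j) := by
    intro i j
    have h := congr_fun (congr_fun hskewB i) j
    simpa [Matrix.transpose_apply, Matrix.diagonal_mul, Matrix.neg_apply, Pi.mul_apply] using h
  have hBkk : B k k = 0 := by
    have h := hskewZ k k
    have hpos : 0 < s k * r k := mul_pos (hs k) (hr k)
    have h2 : (s k * r k) * B k k = 0 := by linarith
    exact (mul_eq_zero.mp h2).resolve_left hpos.ne'
  -- abbreviations
  set a : Fin n → ℕ := fun j => (max (-(B j k)) 0).toNat with hadef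
  have hSne : (∑ m ∈ Finset.range ((r k).toNat + 1),
      z m * (y * ∏ j, p j ^ (B j k)) ^ m) ≠ 0 := by
    intro h0
    apply hX'p k
    have hvalk : X' k p = (p k)⁻¹ * (∏ j, p j ^ a j) ^ (r k).toNat *
        (∑ m ∈ Finset.range ((r k).toNat + 1), z m * (y * ∏ j, p j ^ (B j k)) ^ m) / c := by
      rw [hXk']
    rw [hvalk, h0, mul_zero, zero_div]
  have hvalk : X' k p = (p k)⁻¹ * (∏ j, p j ^ a j) ^ (r k).toNat *
      (∑ m ∈ Finset.range ((r k).toNat + 1), z m * (y * ∏ j, p j ^ (B j k)) ^ m) / c := by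
    rw [hXk']
  set Ev : ℝ := (∑ m ∈ Finset.range ((r k).toNat + 1),
      z m * (y * ∏ j, p j ^ (B j k)) ^ m * m) /
    (∑ m ∈ Finset.range ((r k).toNat + 1), z m * (y * ∏ j, p j ^ (B j k)) ^ m) with hEvdef
  set hv : Fin n → ℝ := fun i => if i = k then -1
    else ((r k : ℝ) * ((max (-(B i k)) 0 : ℤ) : ℝ) + (B i k : ℝ) * Ev) with hhv
  -- the key computation: H = updateColumn 1 k hv
  have hH : Hmat X' p = (1 : Matrix (Fin n) (Fin n) ℝ).updateCol k hv := by
    ext i l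
    rw [Matrix.updateCol_apply]
    by_cases hlk : l = k
    · subst hlk
      rw [if_pos rfl]
      show p i / X' l p * fderiv ℝ (X' l) p (Pi.single i 1) = hv i
      rw [fderiv_single_eq_deriv_update _ _ _ (hd l)]
      have hg : (fun t => X' l (Function.update p i t))
          = (fun t => ((Function.update p i t) l)⁻¹ *
              (∏ j, (Function.update p i t) j ^ a j) ^ (r l).toNat *
              (∑ m ∈ Finset.range ((r l).toNat + 1),
                z m * (y * ∏ j, (Function.update p i t) j ^ (B j l)) ^ m) / c) := by
        funext t; rw [hXk']
      have hder := deriv_update_exchange (r l).toNat hrk0 a (fun j => B j l) y c z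
        hc.ne' p hp i l hSne
      have hderiv : deriv (fun t => X' l (Function.update p i t)) (p i)
          = (((p l)⁻¹ * (∏ j, p j ^ a j) ^ (r l).toNat *
              (∑ m ∈ Finset.range ((r l).toNat + 1),
                z m * (y * ∏ j, p j ^ (B j l)) ^ m) / c) / p i) *
            (-(if i = l then 1 else 0) + ((r l).toNat : ℝ) * (a i : ℝ) + ((B i l : ℤ) : ℝ) * Ev) := by
        rw [hg]
        exact hder.deriv
      rw [hderiv, ← hvalk]
      have hclear : ∀ W : ℝ, p i / X' l p * (X' l p / p i * W) = W := by
        intro W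
        field_simp [hp i, hX'p l]
      rw [hclear]
      by_cases hik : i = l
      · subst hik
        have ha0 : a i = 0 := by simp [hadef, hBkk]
        simp [hhv, ha0, hBkk]
      · have h1 : (((r l).toNat : ℕ) : ℝ) = ((r l : ℤ) : ℝ) := by exact_mod_cast hrkN
        have h2 : ((a i : ℕ) : ℝ) = ((max (-(B i l)) 0 : ℤ) : ℝ) := by
          rw [hadef]
          exact_mod_cast Int.toNat_of_nonneg (le_max_right _ _)
        rw [if_neg hik, hhv]
        simp only [if_neg hik]
        rw [h1, h2]
        ring
    · rw [if_neg hlk]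
      have hXl : X' l = fun q => q l := by rw [hXi l hlk, hX l]
      show p i / X' l p * fderiv ℝ (X' l) p (Pi.single i 1) = (1 : Matrix (Fin n) (Fin n) ℝ) i l
      rw [hXl]
      have hproj : (fun q : Fin n → ℝ => q l)
          = (ContinuousLinearMap.proj l : (Fin n → ℝ) →L[ℝ] ℝ) := rfl
      rw [hproj, ContinuousLinearMap.fderiv]
      rw [Matrix.one_apply]
      by_cases hil : i = l
      · subst hil
        simp [hp i]
      · simp [Pi.single_apply, hil, Ne.symm hil]
  constructor
  · rw [hH]
    -- entries of the middle matrices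
    have hM : ∀ (C : Matrix (Fin n) (Fin n) ℤ) (a b : Fin n),
        (C.map (Int.cast : ℤ → ℝ) * (Matrix.diagonal fun i => ((r i : ℝ))⁻¹) *
          (Matrix.diagonal fun i => ((s i : ℝ))⁻¹)) a b
          = ((C a b : ℤ) : ℝ) * ((r b : ℝ))⁻¹ * ((s b : ℝ))⁻¹ := by
      intro C a b
      rw [Matrix.mul_diagonal, Matrix.mul_diagonal, Matrix.map_apply]
    have hB'e : ∀ a b, B' a b = if a = k ∨ b = k then -B a b
        else B a b + r k * (B a k * max (-B k b) 0 + max (B a k) 0 * B k b) := by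
      intro a b; rw [hB']; rfl
    ext i j
    rw [mul_updateColumn_one_transpose_apply, updateColumn_one_mul_apply,
      updateColumn_one_mul_apply, hM, hM, hM, hM, hM]
    have hMkk : ((B' k k : ℤ) : ℝ) = 0 := by
      rw [hB'e]; simp [hBkk]
    rw [hMkk]
    by_cases hik : i = k <;> by_cases hjk : j = k
    · simp only [hik, hjk]
      simp [hBkk]
    · have e2 : B' k j = -B k j := by rw [hB'e]; simp
      simp only [hik, hhv]
      simp only [if_pos rfl, if_neg hjk]
      rw [e2]
      push_cast
      ring
    · have e1 : B' i k = -B i k := by rw [hB'e]; simp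
      simp only [hjk, hhv]
      simp only [if_pos rfl, if_neg hik]
      rw [e1]
      push_cast
      ring
    · rw [if_neg hik, if_neg hjk]
      have e1 : B' i k = -B i k := by rw [hB'e]; simp
      have e2 : B' k j = -B k j := by rw [hB'e]; simp
      have e3 : B' i j = B i j + r k * (B i k * max (-B k j) 0 + max (B i k) 0 * B k j) := by
        rw [hB'e]; simp [hik, hjk]
      have hrel : ((s j : ℤ) : ℝ) * ((r j : ℤ) : ℝ) * ((B j k : ℤ) : ℝ)
          = -(((s k : ℤ) : ℝ) * ((r k : ℤ) : ℝ) * ((B k j : ℤ) : ℝ)) := by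
        exact_mod_cast congrArg (fun t : ℤ => (t : ℝ)) (hskewZ k j)
      have key := core_identity (r k) (s k) (r j) (s j) Ev (hr k) (hs k) (hr j) (hs j)
        (B i k) (B k j) (B j k) (B i j) hrel
      rw [e1, e2, e3, hhv]
      simp only [if_neg hik, if_neg hjk]
      linear_combination key
  · rw [hH, updateColumn_one_det, hhv]
    simp
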